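/- arXiv:0808.0039 — 4 statements merged into one kernel-verified Lean document; each statement's English description precedes it below -/
import Mathlib

section
/- For every real z > 0 one has the identity h(z−1) − (√z − 1)² = 2·√z·(√z·log(√z) − √z + 1), and consequently h(z−1) ≥ (√z − 1)² for every z > 0. -/
/-- The function `h(z) = (1+z)·log(1+z) − z`, defined for `z > −1`. -/
noncomputable def entropyH (z : ℝ) : ℝ := (1 + z) * Real.log (1 + z) - z

lemma aux_xlogx (x : ℝ) (hx : 0 < x) : x - 1 ≤ x * Real.log x := by
  have h := Real.log_le_sub_one_of_pos (x := x⁻¹) (by positivity)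
  rw [Real.log_inv] at h
  have h2 := mul_le_mul_of_nonneg_left h hx.le
  have h3 : x * x⁻¹ = 1 := mul_inv_cancel₀ hx.ne'
  nlinarith

/-- For every real `z > 0` one has the identity
`h(z−1) − (√z − 1)² = 2·√z·(√z·log √z − √z + 1)`, and consequently
`h(z−1) ≥ (√z − 1)²`. -/
theorem entropyH_sub_one_sub_sq_sqrt_eq (z : ℝ) (hz : 0 < z) :
    entropyH (z - 1) - (Real.sqrt z - 1) ^ 2 =
      2 * Real.sqrt z *
        (Real.sqrt z * Real.log (Real.sqrt z) - Real.sqrt z + 1) ∧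
    (Real.sqrt z - 1) ^ 2 ≤ entropyH (z - 1) := by
  have hs : 0 < Real.sqrt z := Real.sqrt_pos.mpr hz
  have hsq : Real.sqrt z * Real.sqrt z = z := Real.mul_self_sqrt hz.le
  have hid : entropyH (z - 1) - (Real.sqrt z - 1) ^ 2 =
      2 * Real.sqrt z *
        (Real.sqrt z * Real.log (Real.sqrt z) - Real.sqrt z + 1) := by
    simp only [entropyH]
    rw [show 1 + (z - 1) = z by ring, Real.log_sqrt hz.le]
    linear_combination (1 - Real.log z) * hsq
  refine ⟨hid, ?_⟩
  have h1 := aux_xlogx (Real.sqrt z) hs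
  have h2 : 0 ≤ 2 * Real.sqrt z *
      (Real.sqrt z * Real.log (Real.sqrt z) - Real.sqrt z + 1) := by
    apply mul_nonneg (by positivity); linarith
  linarith [hid, h2]
end

section
/- For every real z > −1 one has h(|z|) ≤ h(z); consequently, for every ζ > 0 and every z > −1, the Young-type inequality ζ·|z| ≤ h(z) + h*(ζ) holds. -/
lemma log_le_half_sub_inv {x : ℝ} (hx : 1 ≤ x) : Real.log x ≤ (x - x⁻¹) / 2 := by
  have hmono : MonotoneOn (fun y : ℝ => (y - y⁻¹) / 2 - Real.log y) (Set.Ici 1) := by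
    have hd : ∀ y ∈ Set.Ici (1:ℝ), HasDerivAt (fun y : ℝ => (y - y⁻¹) / 2 - Real.log y)
        ((1 - -(y^2)⁻¹) / 2 - y⁻¹) y := by
      intro y hy
      have hy0 : y ≠ 0 := by have : (1:ℝ) ≤ y := hy; linarith
      exact (((hasDerivAt_id y).sub (hasDerivAt_inv hy0)).div_const 2).sub
        (Real.hasDerivAt_log hy0)
    apply monotoneOn_of_deriv_nonneg (convex_Ici 1)
    · exact ContinuousOn.sub (ContinuousOn.div_const
        ((continuousOn_id).sub (continuousOn_inv₀.mono (by
          intro y hy; have : (1:ℝ) ≤ y := hy; simp; linarith))) 2)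
        (Real.continuousOn_log.mono (by intro y hy; have : (1:ℝ) ≤ y := hy; simp; linarith))
    · intro y hy
      rw [interior_Ici] at hy
      exact ((hd y (Set.mem_Ici.mpr (le_of_lt (show (1:ℝ) < y from hy)))).differentiableAt).differentiableWithinAt
    · intro y hy
      rw [interior_Ici] at hy
      rw [((hd y (Set.mem_Ici.mpr (le_of_lt (show (1:ℝ) < y from hy)))).deriv)]
      have hy1 : (1:ℝ) < y := hy
      have hy0 : 0 < y := by linarith
      have heq : (1 - -(y^2)⁻¹) / 2 - y⁻¹ = (y - 1)^2 / (2 * y^2) := by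
        field_simp; ring
      rw [heq]; positivity
  have h1 : (1:ℝ) ∈ Set.Ici (1:ℝ) := by simp
  have hx' : x ∈ Set.Ici (1:ℝ) := hx
  have := hmono h1 hx' hx
  simp [Real.log_one] at this
  linarith

/-- The Legendre dual `h*(ζ) = exp(ζ) − ζ − 1` of `h`. -/
noncomputable def entropyHStar (ζ : ℝ) : ℝ := Real.exp ζ - ζ - 1


lemma lemA {t : ℝ} (ht : 0 ≤ t) : (1 + t) * Real.log (1 + t) ≤ t + t^2 / 2 := by
  have h1 : (1:ℝ) ≤ 1 + t := by linarith
  have h0 : (0:ℝ) < 1 + t := by linarith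
  have := log_le_half_sub_inv h1
  have h2 : (1 + t) * Real.log (1 + t) ≤ (1 + t) * (((1 + t) - (1 + t)⁻¹) / 2) := by
    exact mul_le_mul_of_nonneg_left this (by linarith)
  have h3 : (1 + t) * (((1 + t) - (1 + t)⁻¹) / 2) = t + t^2 / 2 := by
    field_simp; ring
  linarith

lemma lemB {t : ℝ} (ht : 0 ≤ t) (ht1 : t < 1) : -((1 - t) * Real.log (1 - t)) ≤ t - t^2 / 2 := by
  have h0 : (0:ℝ) < 1 - t := by linarith
  have h1 : (1:ℝ) ≤ (1 - t)⁻¹ := by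
    rw [le_inv_comm₀ one_pos h0]; simp; linarith
  have hlog := log_le_half_sub_inv h1
  rw [Real.log_inv, inv_inv] at hlog
  -- hlog : -Real.log (1 - t) ≤ ((1-t)⁻¹ - (1-t))/2
  have h2 : (1 - t) * (-Real.log (1 - t)) ≤ (1 - t) * (((1 - t)⁻¹ - (1 - t)) / 2) :=
    mul_le_mul_of_nonneg_left hlog (by linarith)
  have h3 : (1 - t) * (((1 - t)⁻¹ - (1 - t)) / 2) = t - t^2 / 2 := by
    field_simp; ring
  nlinarith

lemma part1 : ∀ z : ℝ, -1 < z → entropyH |z| ≤ entropyH z := by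
  intro z hz
  rcases le_or_gt 0 z with h | h
  · rw [abs_of_nonneg h]
  · rw [abs_of_neg h]
    have ht0 : (0:ℝ) ≤ -z := by linarith
    have ht1 : -z < 1 := by linarith
    have hA := lemA ht0
    have hB := lemB ht0 ht1
    simp only [entropyH]
    have hz' : (1 : ℝ) - -z = 1 + z := by ring
    rw [hz'] at hB
    nlinarith

lemma young_nonneg (ζ z : ℝ) (hz : -1 < z) : ζ * z ≤ entropyH z + entropyHStar ζ := by
  have h0 : (0:ℝ) < 1 + z := by linarith
  have key := Real.add_one_le_exp (ζ - Real.log (1 + z))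
  rw [Real.exp_sub, Real.exp_log h0] at key
  have h2 : (1 + z) * (ζ - Real.log (1 + z) + 1) ≤ (1 + z) * (Real.exp ζ / (1 + z)) :=
    mul_le_mul_of_nonneg_left key (by linarith)
  rw [mul_div_cancel₀ _ (ne_of_gt h0)] at h2
  simp only [entropyH, entropyHStar]
  nlinarith

/-- For every real `z > −1` one has `h(|z|) ≤ h(z)`; consequently, for every
`ζ > 0` and every `z > −1` the Young-type inequality `ζ·|z| ≤ h(z) + h*(ζ)`
holds. -/
theorem entropyH_abs_le_and_young :
    (∀ z : ℝ, -1 < z → entropyH |z| ≤ entropyH z) ∧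
    (∀ ζ z : ℝ, 0 < ζ → -1 < z → ζ * |z| ≤ entropyH z + entropyHStar ζ) := by
  refine ⟨part1, fun ζ z hζ hz => ?_⟩
  have h1 : -1 < |z| := lt_of_lt_of_le (by norm_num) (abs_nonneg z)
  have h2 := young_nonneg ζ |z| h1
  have h3 := part1 z hz
  calc ζ * |z| ≤ entropyH |z| + entropyHStar ζ := h2
    _ ≤ entropyH z + entropyHStar ζ := by linarith
end

section
/- (Product Limit Theorem) Let μ be a finite, positive Borel measure on a Borel subset X of ℝ^N. Let (φ_n) and (ψ_n) be sequences of real-valued measurable functions on X such that: (i) there is a constant C with |ψ_n| ≤ C μ-almost everywhere for all n, and ψ_n → ψ μ-almost everywhere on X; (ii) φ_n and φ belong to L¹(μ) and φ_n → φ weakly in L¹(μ), i.e. ∫ φ_n·g dμ → ∫ φ·g dμ for every bounded measurable g. Then the products satisfy φ_n·ψ_n → φ·ψ weakly in L¹(μ), i.e. ∫ φ_n·ψ_n·g dμ → ∫ φ·ψ·g dμ for every bounded measurable g. -/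
set_option linter.unusedSectionVars false
set_option linter.unusedVariables false
set_option maxHeartbeats 1000000
set_option synthInstance.maxHeartbeats 1000000

open MeasureTheory Filter Set

section Auxiliary

variable {α : Type*} [MeasurableSpace α] {μ : Measure α} [IsFiniteMeasure μ]



/-- absolute continuity of the integral of a single integrable function -/
lemma abscont {ρ : α → ℝ} (hρ : Integrable ρ μ) {ε : ℝ} (hε : 0 < ε) :
    ∃ δ > 0, ∀ s : Set α, MeasurableSet s → μ s ≤ ENNReal.ofReal δ →
      ∫ x in s, |ρ x| ∂μ ≤ ε := by
  obtain ⟨δ, hδ, h⟩ := (memLp_one_iff_integrable.2 hρ).eLpNorm_indicator_le le_rfl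
    (by norm_num) hε
  refine ⟨δ, hδ, fun s hs hμs => ?_⟩
  have h1 := h s hs hμs
  have h2 : ∫ x in s, |ρ x| ∂μ = (eLpNorm (s.indicator ρ) 1 μ).toReal := by
    rw [eLpNorm_one_eq_lintegral_enorm]
    have : ∀ x, (‖s.indicator ρ x‖ₑ : ENNReal) = s.indicator (fun y => (‖ρ y‖ₑ : ENNReal)) x := by
      intro x
      by_cases hx : x ∈ s <;> simp [indicator_of_mem, indicator_of_notMem, hx]
    simp_rw [this]
    rw [lintegral_indicator hs]
    have := integral_norm_eq_lintegral_enorm (f := ρ) (μ := μ.restrict s)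
      (hρ.restrict.aestronglyMeasurable)
    simp only [Real.norm_eq_abs] at this
    rw [this]
  rw [h2]
  calc (eLpNorm (s.indicator ρ) 1 μ).toReal ≤ (ENNReal.ofReal ε).toReal :=
        ENNReal.toReal_mono ENNReal.ofReal_ne_top h1
    _ = ε := ENNReal.toReal_ofReal hε.le

lemma exists_indicator_rep {w : α → ℝ} (hw : AEStronglyMeasurable w μ)
    (h01 : ∀ᵐ x ∂μ, w x = 0 ∨ w x = 1) :
    ∃ D : Set α, MeasurableSet D ∧ w =ᵐ[μ] D.indicator (fun _ => 1) ∧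
      μ D = ENNReal.ofReal (∫ x, w x ∂μ) := by
  set w' := hw.aemeasurable.mk w with hw'
  have hw'm : Measurable w' := hw.aemeasurable.measurable_mk
  set D : Set α := {x | (1:ℝ)/2 < w' x} with hD
  have hDm : MeasurableSet D := measurableSet_lt measurable_const hw'm
  have heq : w =ᵐ[μ] D.indicator (fun _ => 1) := by
    filter_upwards [hw.aemeasurable.ae_eq_mk, h01] with x hx h01x
    rcases h01x with h0 | h1
    · have : x ∉ D := by
        simp only [hD, Set.mem_setOf_eq, hw', ← hx, h0, not_lt]
        norm_num
      simp [indicator_of_notMem this, h0]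
    · have : x ∈ D := by
        simp only [hD, Set.mem_setOf_eq, hw', ← hx, h1]
        norm_num
      simp [indicator_of_mem this, h1]
  refine ⟨D, hDm, heq, ?_⟩
  have : ∫ x, w x ∂μ = ∫ x, D.indicator (fun _ => (1:ℝ)) x ∂μ := integral_congr_ae heq
  rw [this, integral_indicator hDm]
  rw [setIntegral_const]
  simp only [smul_eq_mul, mul_one]
  rw [measureReal_def, ENNReal.ofReal_toReal (measure_ne_top μ D)]

lemma integral_mul01_le {ρ w : α → ℝ} (hρ : Integrable ρ μ)
    (hw : AEStronglyMeasurable w μ) (h01 : ∀ᵐ x ∂μ, w x = 0 ∨ w x = 1) {δ ε : ℝ}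
    (habs : ∀ s : Set α, MeasurableSet s → μ s ≤ ENNReal.ofReal δ → ∫ x in s, |ρ x| ∂μ ≤ ε)
    (hwint : ∫ x, w x ∂μ ≤ δ) : ∫ x, |ρ x| * w x ∂μ ≤ ε := by
  obtain ⟨D, hDm, heq, hμD⟩ := exists_indicator_rep hw h01
  have h1 : (fun x => |ρ x| * w x) =ᵐ[μ] D.indicator (fun x => |ρ x|) := by
    filter_upwards [heq] with x hx
    by_cases hxD : x ∈ D
    · simp [hx, indicator_of_mem hxD]
    · simp [hx, indicator_of_notMem hxD]
  rw [integral_congr_ae h1, integral_indicator hDm]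
  exact habs D hDm (hμD ▸ ENNReal.ofReal_le_ofReal hwint)


omit [IsFiniteMeasure μ] in
lemma Linf_ae_bound (f : Lp ℝ ⊤ μ) : ∀ᵐ x ∂μ, ‖(f : α → ℝ) x‖ ≤ ‖f‖ := by
  filter_upwards [ae_le_eLpNormEssSup (f := (f : α → ℝ)) (μ := μ)] with x hx
  have h1 : ‖f‖ = (eLpNormEssSup (f : α → ℝ) μ).toReal := by
    rw [Lp.norm_def, eLpNorm_exponent_top]
  have h2 : eLpNormEssSup (f : α → ℝ) μ ≠ ⊤ := by
    rw [← eLpNorm_exponent_top]; exact Lp.eLpNorm_ne_top f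
  rw [h1]
  have := ENNReal.toReal_mono h2 hx
  simpa using this

lemma weak_norm_bound (φ : ℕ → α → ℝ) (hm : ∀ n, Measurable (φ n))
    (hint : ∀ n, Integrable (φ n) μ)
    (hconv : ∀ g : α → ℝ, Measurable g → (∃ B : ℝ, ∀ x, |g x| ≤ B) →
      ∃ L : ℝ, Tendsto (fun n => ∫ x, φ n x * g x ∂μ) atTop (nhds L)) :
    ∃ M : ℝ, ∀ n, ∫ x, |φ n x| ∂μ ≤ M := by
  haveI : Fact ((1:ENNReal) ≤ ⊤) := ⟨le_top⟩
  -- the linear functionals on L∞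
  have hTint : ∀ (n : ℕ) (f : Lp ℝ ⊤ μ), Integrable (fun x => (f : α → ℝ) x * φ n x) μ :=
    fun n f => (hint n).bdd_mul (Lp.aestronglyMeasurable f) (Linf_ae_bound f)
  set T : ℕ → Lp ℝ ⊤ μ →L[ℝ] ℝ := fun n =>
    LinearMap.mkContinuous
      { toFun := fun f => ∫ x, (f : α → ℝ) x * φ n x ∂μ
        map_add' := fun f g => by
          have h1 : ∫ x, ((f + g : Lp ℝ ⊤ μ) : α → ℝ) x * φ n x ∂μ
              = ∫ x, ((f : α → ℝ) x * φ n x + (g : α → ℝ) x * φ n x) ∂μ := by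
            refine integral_congr_ae ?_
            filter_upwards [Lp.coeFn_add f g] with x hx
            rw [hx, Pi.add_apply, add_mul]
          rw [h1, integral_add (hTint n f) (hTint n g)]
        map_smul' := fun c f => by
          have h1 : ∫ x, ((c • f : Lp ℝ ⊤ μ) : α → ℝ) x * φ n x ∂μ
              = ∫ x, c * ((f : α → ℝ) x * φ n x) ∂μ := by
            refine integral_congr_ae ?_
            filter_upwards [Lp.coeFn_smul c f] with x hx
            rw [hx, Pi.smul_apply, smul_eq_mul, mul_assoc]
          rw [h1, integral_const_mul]
          rfl }
      (∫ x, |φ n x| ∂μ)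
      (fun f => by
        simp only [LinearMap.coe_mk, AddHom.coe_mk]
        calc ‖∫ x, (f : α → ℝ) x * φ n x ∂μ‖ ≤ ∫ x, ‖(f : α → ℝ) x * φ n x‖ ∂μ :=
              norm_integral_le_integral_norm _
          _ ≤ ∫ x, ‖f‖ * |φ n x| ∂μ := by
              refine integral_mono_ae (hTint n f).norm ((hint n).abs.const_mul _) ?_
              filter_upwards [Linf_ae_bound f] with x hx
              rw [norm_mul]
              exact mul_le_mul_of_nonneg_right hx (norm_nonneg _)
          _ = (∫ x, |φ n x| ∂μ) * ‖f‖ := by rw [integral_const_mul, mul_comm]) with hT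
  -- pointwise boundedness
  have hpb : ∀ f : Lp ℝ ⊤ μ, ∃ C : ℝ, ∀ n, ‖T n f‖ ≤ C := by
    intro f
    have hfm : AEMeasurable (f : α → ℝ) μ := (Lp.aestronglyMeasurable f).aemeasurable
    set g : α → ℝ := fun x => max (-‖f‖) (min ‖f‖ (hfm.mk _ x)) with hg
    have hgm : Measurable g := by
      rw [hg]; exact Measurable.max measurable_const (Measurable.min measurable_const hfm.measurable_mk)
    have hgb : ∀ x, |g x| ≤ ‖f‖ := by
      intro x
      rw [abs_le]
      constructor
      · exact le_max_left _ _
      · exact max_le (neg_nonpos.2 (norm_nonneg f) |>.trans (norm_nonneg f)) (min_le_left _ _)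
    have hgae : g =ᵐ[μ] (f : α → ℝ) := by
      filter_upwards [hfm.ae_eq_mk, Linf_ae_bound f] with x hx hbx
      rw [hg]
      simp only
      rw [← hx]
      rw [Real.norm_eq_abs, abs_le] at hbx
      rw [min_eq_right hbx.2, max_eq_right hbx.1]
    obtain ⟨L, hL⟩ := hconv g hgm ⟨‖f‖, hgb⟩
    have heq : (fun n => ∫ x, φ n x * g x ∂μ) = fun n => T n f := by
      funext n
      have : ∫ x, φ n x * g x ∂μ = ∫ x, (f : α → ℝ) x * φ n x ∂μ := by
        refine integral_congr_ae ?_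
        filter_upwards [hgae] with x hx
        rw [hx, mul_comm]
      rw [this]; rfl
    rw [heq] at hL
    obtain ⟨C, hC⟩ := hL.norm.bddAbove_range
    exact ⟨C, fun n => hC ⟨n, rfl⟩⟩
  obtain ⟨C', hC'⟩ := banach_steinhaus hpb
  refine ⟨C', fun n => ?_⟩
  -- test against the sign of φ n
  set sg : α → ℝ := fun x => if 0 ≤ φ n x then 1 else -1 with hsg
  have hsgm : Measurable sg := Measurable.ite (measurableSet_le measurable_const (hm n))
    measurable_const measurable_const
  have hsgb : ∀ x, ‖sg x‖ ≤ 1 := by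
    intro x; rw [hsg]; by_cases h : 0 ≤ φ n x <;> simp [h]
  have hmem : MemLp sg ⊤ μ := memLp_top_of_bound hsgm.aestronglyMeasurable 1
    (Eventually.of_forall hsgb)
  have hnorm : ‖hmem.toLp sg‖ ≤ 1 := by
    rw [Lp.norm_toLp, eLpNorm_exponent_top]
    have := eLpNormEssSup_le_of_ae_bound (μ := μ) (C := 1) (Eventually.of_forall hsgb)
    calc (eLpNormEssSup sg μ).toReal ≤ (ENNReal.ofReal 1).toReal :=
          ENNReal.toReal_mono ENNReal.ofReal_ne_top this
      _ = 1 := by norm_num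
  have hval : T n (hmem.toLp sg) = ∫ x, |φ n x| ∂μ := by
    have h1 : T n (hmem.toLp sg) = ∫ x, ((hmem.toLp sg : α → ℝ)) x * φ n x ∂μ := rfl
    rw [h1]
    refine integral_congr_ae ?_
    filter_upwards [hmem.coeFn_toLp] with x hx
    rw [hx, hsg]
    by_cases h : 0 ≤ φ n x
    · simp [h, abs_of_nonneg h]
    · simp [h, abs_of_neg (lt_of_not_ge h)]
  calc ∫ x, |φ n x| ∂μ = T n (hmem.toLp sg) := hval.symm
    _ ≤ ‖T n (hmem.toLp sg)‖ := le_abs_self _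
    _ ≤ ‖T n‖ * ‖hmem.toLp sg‖ := (T n).le_opNorm _
    _ ≤ C' * 1 := by
        refine mul_le_mul (hC' n) hnorm (norm_nonneg _) ?_
        exact (norm_nonneg (T 0)).trans (hC' 0)
    _ = C' := mul_one C'
section UAC

variable (φ : ℕ → α → ℝ)

/-- The set of `{0,1}`-valued elements of `L¹`. -/
def Szero (μ : Measure α) : Set (Lp ℝ 1 μ) :=
  {f | ∀ᵐ x ∂μ, (f : α → ℝ) x = 0 ∨ (f : α → ℝ) x = 1}

lemma Szero_closed : IsClosed (Szero μ) := by
  haveI : Fact ((1:ENNReal) ≤ 1) := ⟨le_rfl⟩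
  refine IsSeqClosed.isClosed ?_
  intro fk f hfk hlim
  have htm : TendstoInMeasure μ (fun k => ((fk k : Lp ℝ 1 μ) : α → ℝ)) atTop (f : α → ℝ) :=
    tendstoInMeasure_of_tendsto_Lp hlim
  obtain ⟨ns, -, hae⟩ := htm.exists_seq_tendsto_ae
  have hall : ∀ᵐ x ∂μ, ∀ i, ((fk (ns i) : Lp ℝ 1 μ) : α → ℝ) x = 0 ∨
      ((fk (ns i) : Lp ℝ 1 μ) : α → ℝ) x = 1 := ae_all_iff.2 fun i => hfk (ns i)
  filter_upwards [hae, hall] with x hx hallx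
  have hcl : IsClosed ({0, 1} : Set ℝ) := (Set.toFinite ({0,1} : Set ℝ)).isClosed
  have : (f : α → ℝ) x ∈ ({0, 1} : Set ℝ) := by
    refine hcl.mem_of_tendsto hx (Eventually.of_forall fun i => ?_)
    rcases hallx i with h | h <;> simp [h]
  simpa using this

lemma indicator_mem_Szero {s : Set α} (hs : MeasurableSet s) :
    indicatorConstLp 1 hs (measure_ne_top μ s) (1 : ℝ) ∈ Szero μ := by
  filter_upwards [indicatorConstLp_coeFn (p := 1) (hs := hs)
    (hμs := measure_ne_top μ s) (c := (1:ℝ))] with x hx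
  rw [hx]
  by_cases h : x ∈ s
  · right; simp [indicator_of_mem h]
  · left; simp [indicator_of_notMem h]

lemma weak_uac (hm : ∀ n, Measurable (φ n)) (hint : ∀ n, Integrable (φ n) μ)
    (hconv : ∀ g : α → ℝ, Measurable g → (∃ B : ℝ, ∀ x, |g x| ≤ B) →
      ∃ L : ℝ, Tendsto (fun n => ∫ x, φ n x * g x ∂μ) atTop (nhds L)) :
    ∀ ε : ℝ, 0 < ε → ∃ δ > 0, ∀ n, ∀ s : Set α, MeasurableSet s →
      μ s ≤ ENNReal.ofReal δ → ∫ x in s, |φ n x| ∂μ ≤ ε := by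
  intro ε hε
  haveI : Fact ((1:ENNReal) ≤ 1) := ⟨le_rfl⟩
  set ε' : ℝ := ε / 8 with hε'def
  have hε' : 0 < ε' := by positivity
  -- integrability of products with members of Szero
  have hSint : ∀ (n : ℕ) (f : Szero μ), Integrable (fun x => ((f : Lp ℝ 1 μ) : α → ℝ) x * φ n x) μ := by
    intro n f
    refine (hint n).bdd_mul (c := 1) (Lp.aestronglyMeasurable _) ?_
    filter_upwards [f.2] with x hx
    rcases hx with h | h <;> simp [h]
  set U : ℕ → Szero μ → ℝ := fun n f => ∫ x, ((f : Lp ℝ 1 μ) : α → ℝ) x * φ n x ∂μ with hU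
  -- continuity of each U n
  have hUcont : ∀ n, Continuous (U n) := by
    intro n
    rw [Metric.continuous_iff]
    intro b ε₀ hε₀
    obtain ⟨δ, hδ, habs⟩ := abscont (hint n) (half_pos hε₀)
    refine ⟨δ, hδ, fun a hab => ?_⟩
    set w : α → ℝ := fun x => |((a : Lp ℝ 1 μ) : α → ℝ) x - ((b : Lp ℝ 1 μ) : α → ℝ) x| with hw
    have hwm : AEStronglyMeasurable w μ := by
      have := ((Lp.aestronglyMeasurable (a : Lp ℝ 1 μ)).sub
        (Lp.aestronglyMeasurable (b : Lp ℝ 1 μ))).norm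
      simpa [Real.norm_eq_abs] using this
    have hw01 : ∀ᵐ x ∂μ, w x = 0 ∨ w x = 1 := by
      filter_upwards [a.2, b.2] with x hxa hxb
      rcases hxa with h | h <;> rcases hxb with h' | h' <;> simp [hw, h, h']
    have hwint : ∫ x, w x ∂μ ≤ δ := by
      have h1 : ∫ x, w x ∂μ = ‖(a : Lp ℝ 1 μ) - (b : Lp ℝ 1 μ)‖ := by
        rw [L1.norm_eq_integral_norm]
        refine integral_congr_ae ?_
        filter_upwards [Lp.coeFn_sub (a : Lp ℝ 1 μ) (b : Lp ℝ 1 μ)] with x hx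
        rw [hx]; simp [hw, Real.norm_eq_abs]
      rw [h1]
      rw [Subtype.dist_eq, dist_eq_norm] at hab
      exact hab.le
    have key : ∫ x, |φ n x| * w x ∂μ ≤ ε₀ / 2 :=
      integral_mul01_le (hint n) hwm hw01 habs hwint
    have h2 : dist (U n a) (U n b) ≤ ∫ x, |φ n x| * w x ∂μ := by
      rw [Real.dist_eq, hU]
      have h3 : (∫ x, ((a : Lp ℝ 1 μ) : α → ℝ) x * φ n x ∂μ)
          - ∫ x, ((b : Lp ℝ 1 μ) : α → ℝ) x * φ n x ∂μ
          = ∫ x, (((a : Lp ℝ 1 μ) : α → ℝ) x - ((b : Lp ℝ 1 μ) : α → ℝ) x) * φ n x ∂μ := by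
        rw [← integral_sub (hSint n a) (hSint n b)]
        congr 1; funext x; ring
      rw [h3]
      calc |∫ x, (((a : Lp ℝ 1 μ) : α → ℝ) x - ((b : Lp ℝ 1 μ) : α → ℝ) x) * φ n x ∂μ|
          ≤ ∫ x, |(((a : Lp ℝ 1 μ) : α → ℝ) x - ((b : Lp ℝ 1 μ) : α → ℝ) x) * φ n x| ∂μ := by
            simpa only [Real.norm_eq_abs] using norm_integral_le_integral_norm
              (fun x => (((a : Lp ℝ 1 μ) : α → ℝ) x - ((b : Lp ℝ 1 μ) : α → ℝ) x) * φ n x) (μ := μ)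
        _ = ∫ x, |φ n x| * w x ∂μ := by
            congr 1; funext x; rw [abs_mul, hw]; ring
    exact lt_of_le_of_lt (h2.trans key) (half_lt_self hε₀)
  -- pointwise convergence of U n f for each f in Szero
  have hUconv : ∀ f : Szero μ, ∃ L : ℝ, Tendsto (fun n => U n f) atTop (nhds L) := by
    intro f
    have hfm : AEMeasurable ((f : Lp ℝ 1 μ) : α → ℝ) μ :=
      (Lp.aestronglyMeasurable (f : Lp ℝ 1 μ)).aemeasurable
    set g : α → ℝ := fun x => max 0 (min 1 (hfm.mk _ x)) with hg
    have hgm : Measurable g := by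
      rw [hg]
      exact Measurable.max measurable_const (Measurable.min measurable_const hfm.measurable_mk)
    have hgb : ∀ x, |g x| ≤ 1 := by
      intro x
      rw [abs_le]
      refine ⟨neg_nonpos.2 zero_le_one |>.trans (le_max_left _ _), ?_⟩
      exact max_le zero_le_one (min_le_left _ _)
    have hgae : g =ᵐ[μ] ((f : Lp ℝ 1 μ) : α → ℝ) := by
      filter_upwards [hfm.ae_eq_mk, f.2] with x hx h01
      rw [hg]
      simp only
      rw [← hx]
      rcases h01 with h | h <;> simp [h]
    obtain ⟨L, hL⟩ := hconv g hgm ⟨1, hgb⟩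
    refine ⟨L, ?_⟩
    have heq : (fun n => ∫ x, φ n x * g x ∂μ) = fun n => U n f := by
      funext n
      refine integral_congr_ae ?_
      filter_upwards [hgae] with x hx
      rw [hx, mul_comm]
    rwa [heq] at hL
  -- the closed pieces
  set F : ℕ → Set (Szero μ) := fun k =>
    ⋂ (m : ℕ) (n : ℕ) (_ : k ≤ m) (_ : k ≤ n), {f : Szero μ | |U m f - U n f| ≤ ε'} with hF
  have hFclosed : ∀ k, IsClosed (F k) := by
    intro k
    refine isClosed_iInter fun m => isClosed_iInter fun n =>
      isClosed_iInter fun _ => isClosed_iInter fun _ => ?_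
    have : Continuous fun f : Szero μ => |U m f - U n f| :=
      ((hUcont m).sub (hUcont n)).abs
    exact isClosed_le this continuous_const
  have hFcover : ⋃ k, F k = univ := by
    refine eq_univ_of_forall fun f => ?_
    obtain ⟨L, hL⟩ := hUconv f
    obtain ⟨N, hN⟩ := (Metric.tendsto_atTop.1 hL) (ε' / 2) (half_pos hε')
    refine mem_iUnion.2 ⟨N, ?_⟩
    rw [hF]
    refine mem_iInter.2 fun m => mem_iInter.2 fun n => mem_iInter.2 fun hmN =>
      mem_iInter.2 fun hnN => ?_
    have h1 := hN m hmN
    have h2 := hN n hnN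
    rw [Real.dist_eq] at h1 h2
    calc |U m f - U n f| = |(U m f - L) - (U n f - L)| := by ring_nf
      _ ≤ |U m f - L| + |U n f - L| := abs_sub _ _
      _ ≤ ε' / 2 + ε' / 2 := add_le_add h1.le h2.le
      _ = ε' := by ring
  -- Baire category
  haveI : CompleteSpace (Szero μ) := (Szero_closed (μ := μ)).completeSpace_coe
  haveI : Nonempty (Szero μ) := by
    refine ⟨⟨(0 : Lp ℝ 1 μ), ?_⟩⟩
    filter_upwards [Lp.coeFn_zero ℝ 1 μ] with x hx
    left; exact hx
  obtain ⟨k₀, f₀, hf₀⟩ := nonempty_interior_of_iUnion_of_closed hFclosed hFcover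
  obtain ⟨r, hr, hball⟩ := Metric.mem_nhds_iff.1 (mem_interior_iff_mem_nhds.1 hf₀)
  -- f₀ is a.e. an indicator
  obtain ⟨A₀, hA₀m, hA₀eq, -⟩ := exists_indicator_rep
    (Lp.aestronglyMeasurable ((f₀ : Szero μ) : Lp ℝ 1 μ)) f₀.2
  have hf₀eq : ((f₀ : Szero μ) : Lp ℝ 1 μ) = indicatorConstLp 1 hA₀m (measure_ne_top μ A₀) (1:ℝ) :=
    Lp.ext (hA₀eq.trans (indicatorConstLp_coeFn (p := 1) (hs := hA₀m)
      (hμs := measure_ne_top μ A₀) (c := (1:ℝ))).symm)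
  -- a small-perturbation estimate
  have hperturb : ∀ (P : Set α) (hP : MeasurableSet P), μ (symmDiff P A₀) < ENNReal.ofReal r →
      (⟨indicatorConstLp 1 hP (measure_ne_top μ P) (1:ℝ), indicator_mem_Szero hP⟩ : Szero μ) ∈ F k₀ := by
    intro P hP hμP
    refine hball ?_
    rw [Metric.mem_ball, Subtype.dist_eq]
    simp only
    rw [hf₀eq, dist_indicatorConstLp_eq_norm, norm_indicatorConstLp (by norm_num) (by norm_num)]
    simp only [norm_one, one_mul, ENNReal.toReal_one, measureReal_def, div_one, Real.rpow_one]
    rw [← ENNReal.toReal_ofReal hr.le]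
    exact ENNReal.toReal_strict_mono ENNReal.ofReal_ne_top hμP
  -- the key cancellation estimate
  have hcancel : ∀ s : Set α, MeasurableSet s → μ s ≤ ENNReal.ofReal (r/2) →
      ∀ n, k₀ ≤ n → |(∫ x in s, φ n x ∂μ) - ∫ x in s, φ k₀ x ∂μ| ≤ 2 * ε' := by
    intro s hs hμs n hn
    have hofr : ENNReal.ofReal (r/2) < ENNReal.ofReal r :=
      (ENNReal.ofReal_lt_ofReal_iff hr).2 (half_lt_self hr)
    set P₁ : Set α := A₀ ∪ s with hP₁
    set P₂ : Set α := A₀ \ s with hP₂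
    have hP₁m : MeasurableSet P₁ := hA₀m.union hs
    have hP₂m : MeasurableSet P₂ := hA₀m.diff hs
    have hsub₁ : symmDiff P₁ A₀ ⊆ s := by
      intro x hx
      rw [Set.mem_symmDiff] at hx
      rcases hx with ⟨hx1, hx2⟩ | ⟨hx1, hx2⟩
      · rcases hx1 with h | h
        · exact absurd h hx2
        · exact h
      · exact absurd (Or.inl hx1) hx2
    have hsub₂ : symmDiff P₂ A₀ ⊆ s := by
      intro x hx
      rw [Set.mem_symmDiff] at hx
      rcases hx with ⟨hx1, hx2⟩ | ⟨hx1, hx2⟩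
      · exact absurd hx1.1 hx2
      · by_contra hxs
        exact hx2 ⟨hx1, hxs⟩
    have hmem₁ := hperturb P₁ hP₁m (lt_of_le_of_lt ((measure_mono hsub₁).trans hμs) hofr)
    have hmem₂ := hperturb P₂ hP₂m (lt_of_le_of_lt ((measure_mono hsub₂).trans hμs) hofr)
    set su₁ : Szero μ := ⟨indicatorConstLp 1 hP₁m (measure_ne_top μ P₁) (1:ℝ),
      indicator_mem_Szero hP₁m⟩
    set su₂ : Szero μ := ⟨indicatorConstLp 1 hP₂m (measure_ne_top μ P₂) (1:ℝ),
      indicator_mem_Szero hP₂m⟩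
    have hb₁ : ∀ m, k₀ ≤ m → |U m su₁ - U k₀ su₁| ≤ ε' := by
      intro m hmk
      rw [hF] at hmem₁
      exact mem_iInter.1 (mem_iInter.1 (mem_iInter.1 (mem_iInter.1 hmem₁ m) k₀) hmk) le_rfl
    have hb₂ : ∀ m, k₀ ≤ m → |U m su₂ - U k₀ su₂| ≤ ε' := by
      intro m hmk
      rw [hF] at hmem₂
      exact mem_iInter.1 (mem_iInter.1 (mem_iInter.1 (mem_iInter.1 hmem₂ m) k₀) hmk) le_rfl
    have hid : ∀ m, U m su₁ - U m su₂ = ∫ x in s, φ m x ∂μ := by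
      intro m
      rw [hU]
      simp only
      rw [← integral_sub (hSint m su₁) (hSint m su₂)]
      rw [← integral_indicator hs]
      refine integral_congr_ae ?_
      filter_upwards [indicatorConstLp_coeFn (p := 1) (hs := hP₁m)
          (hμs := measure_ne_top μ P₁) (c := (1:ℝ)),
        indicatorConstLp_coeFn (p := 1) (hs := hP₂m)
          (hμs := measure_ne_top μ P₂) (c := (1:ℝ))] with x h1 h2
      rw [h1, h2]
      by_cases hxA : x ∈ A₀ <;> by_cases hxs : x ∈ s <;>
        simp [hP₁, hP₂, Set.indicator_apply, hxA, hxs]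
    calc |(∫ x in s, φ n x ∂μ) - ∫ x in s, φ k₀ x ∂μ|
        = |(U n su₁ - U k₀ su₁) - (U n su₂ - U k₀ su₂)| := by
          rw [← hid n, ← hid k₀]; ring_nf
      _ ≤ |U n su₁ - U k₀ su₁| + |U n su₂ - U k₀ su₂| := abs_sub _ _
      _ ≤ ε' + ε' := add_le_add (hb₁ n hn) (hb₂ n hn)
      _ = 2 * ε' := by ring
  -- absolute continuity constants for φ 0, ..., φ k₀
  have hind : ∀ n : ℕ, ∃ δ > 0, ∀ s : Set α, MeasurableSet s → μ s ≤ ENNReal.ofReal δ →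
      ∫ x in s, |φ n x| ∂μ ≤ ε' := fun n => abscont (hint n) hε'
  choose d hd hds using hind
  have hne : ((Finset.range (k₀+1)) : Finset ℕ).Nonempty := Finset.nonempty_range_iff.2 (Nat.succ_ne_zero _)
  set δ : ℝ := min (r/2) ((Finset.range (k₀+1)).inf' hne d) with hδdef
  have hδpos : 0 < δ := by
    refine lt_min (half_pos hr) ?_
    rw [Finset.lt_inf'_iff]
    exact fun i _ => hd i
  refine ⟨δ, hδpos, fun n s hs hμs => ?_⟩
  have hδd : ∀ i, i ≤ k₀ → δ ≤ d i := fun i hi =>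
    (min_le_right _ _).trans (Finset.inf'_le d (Finset.mem_range.2 (Nat.lt_succ_of_le hi)))
  by_cases hcase : n ≤ k₀
  · exact (hds n s hs (hμs.trans (ENNReal.ofReal_le_ofReal (hδd n hcase)))).trans
      (by rw [hε'def]; linarith)
  · push_neg at hcase
    have hk₀n : k₀ ≤ n := hcase.le
    -- |∫_A φ n| ≤ 3 ε' for all small A
    have hA : ∀ A : Set α, MeasurableSet A → μ A ≤ ENNReal.ofReal δ →
        |∫ x in A, φ n x ∂μ| ≤ 3 * ε' := by
      intro A hA hμA
      have h1 := hcancel A hA (hμA.trans (ENNReal.ofReal_le_ofReal (min_le_left _ _))) n hk₀n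
      have h2 : |∫ x in A, φ k₀ x ∂μ| ≤ ε' := by
        calc |∫ x in A, φ k₀ x ∂μ| ≤ ∫ x in A, |φ k₀ x| ∂μ := by
              simpa only [Real.norm_eq_abs] using
                norm_integral_le_integral_norm (φ k₀) (μ := μ.restrict A)
          _ ≤ ε' := hds k₀ A hA (hμA.trans (ENNReal.ofReal_le_ofReal (hδd k₀ le_rfl)))
      calc |∫ x in A, φ n x ∂μ|
          ≤ |(∫ x in A, φ n x ∂μ) - ∫ x in A, φ k₀ x ∂μ| + |∫ x in A, φ k₀ x ∂μ| := by
            have := abs_add_le ((∫ x in A, φ n x ∂μ) - ∫ x in A, φ k₀ x ∂μ) (∫ x in A, φ k₀ x ∂μ)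
            simpa using this
        _ ≤ 2 * ε' + ε' := add_le_add h1 h2
        _ = 3 * ε' := by ring
    -- split s into positive and negative parts of φ n
    set sp : Set α := s ∩ {x | 0 ≤ φ n x} with hsp
    set sn : Set α := s ∩ {x | φ n x < 0} with hsn
    have hspm : MeasurableSet sp := hs.inter (measurableSet_le measurable_const (hm n))
    have hsnm : MeasurableSet sn := hs.inter (measurableSet_lt (hm n) measurable_const)
    have hsunion : s = sp ∪ sn := by
      ext x
      simp only [hsp, hsn, Set.mem_union, Set.mem_inter_iff, Set.mem_setOf_eq]
      constructor
      · intro hx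
        rcases le_or_gt 0 (φ n x) with h | h
        · exact Or.inl ⟨hx, h⟩
        · exact Or.inr ⟨hx, h⟩
      · rintro (⟨h, -⟩ | ⟨h, -⟩) <;> exact h
    have hdisj : Disjoint sp sn := by
      rw [Set.disjoint_left]
      rintro x ⟨-, h1⟩ ⟨-, h2⟩
      simp only [Set.mem_setOf_eq] at h1 h2
      exact absurd h1 (not_le.mpr h2)
    have hsplit : ∫ x in s, |φ n x| ∂μ = (∫ x in sp, |φ n x| ∂μ) + ∫ x in sn, |φ n x| ∂μ := by
      rw [hsunion]
      exact setIntegral_union hdisj hsnm ((hint n).abs.integrableOn) ((hint n).abs.integrableOn)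
    have hμsp : μ sp ≤ ENNReal.ofReal δ := (measure_mono Set.inter_subset_left).trans hμs
    have hμsn : μ sn ≤ ENNReal.ofReal δ := (measure_mono Set.inter_subset_left).trans hμs
    have hpos : ∫ x in sp, |φ n x| ∂μ ≤ 3 * ε' := by
      have : ∫ x in sp, |φ n x| ∂μ = ∫ x in sp, φ n x ∂μ :=
        setIntegral_congr_fun hspm (fun x hx => abs_of_nonneg hx.2)
      rw [this]
      exact (le_abs_self _).trans (hA sp hspm hμsp)
    have hneg : ∫ x in sn, |φ n x| ∂μ ≤ 3 * ε' := by
      have : ∫ x in sn, |φ n x| ∂μ = - ∫ x in sn, φ n x ∂μ := by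
        rw [← integral_neg]
        exact setIntegral_congr_fun hsnm (fun x hx => abs_of_neg hx.2)
      rw [this]
      exact (neg_le_abs _).trans (hA sn hsnm hμsn)
    rw [hsplit]
    calc (∫ x in sp, |φ n x| ∂μ) + ∫ x in sn, |φ n x| ∂μ ≤ 3 * ε' + 3 * ε' :=
          add_le_add hpos hneg
      _ ≤ ε := by rw [hε'def]; linarith

end UAC


/-- The main convergence statement, in a general finite measure space. -/
lemma product_limit_main {α : Type*} [MeasurableSpace α] (μ : Measure α) [IsFiniteMeasure μ]
    (φ ψ : ℕ → α → ℝ) (φlim ψlim : α → ℝ)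
    (hφm : ∀ n, Measurable (φ n)) (hψm : ∀ n, Measurable (ψ n))
    (hφlm : Measurable φlim) (hψlm : Measurable ψlim)
    (C : ℝ) (hψbd : ∀ n, ∀ᵐ x ∂μ, |ψ n x| ≤ C)
    (hψae : ∀ᵐ x ∂μ, Tendsto (fun n => ψ n x) atTop (nhds (ψlim x)))
    (hφint : ∀ n, Integrable (φ n) μ) (hφlimint : Integrable φlim μ)
    (hφweak : ∀ g : α → ℝ, Measurable g → (∃ B : ℝ, ∀ x, |g x| ≤ B) →
      Tendsto (fun n => ∫ x, φ n x * g x ∂μ) atTop (nhds (∫ x, φlim x * g x ∂μ))) :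
    (∀ n, Integrable (fun x => φ n x * ψ n x) μ) ∧
    Integrable (fun x => φlim x * ψlim x) μ ∧
    (∀ g : α → ℝ, Measurable g → (∃ B : ℝ, ∀ x, |g x| ≤ B) →
      Tendsto (fun n => ∫ x, φ n x * ψ n x * g x ∂μ) atTop
        (nhds (∫ x, φlim x * ψlim x * g x ∂μ))) := by
  set C' : ℝ := max C 0 with hC'def
  have hC'0 : 0 ≤ C' := le_max_right _ _
  have hψbd' : ∀ n, ∀ᵐ x ∂μ, |ψ n x| ≤ C' := fun n => by
    filter_upwards [hψbd n] with x hx; exact hx.trans (le_max_left _ _)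
  have hψlimbd : ∀ᵐ x ∂μ, |ψlim x| ≤ C' := by
    filter_upwards [ae_all_iff.2 hψbd', hψae] with x hx htend
    exact le_of_tendsto' htend.abs hx
  -- the truncated limit
  set ψ' : α → ℝ := fun x => max (-C') (min C' (ψlim x)) with hψ'def
  have hψ'm : Measurable ψ' :=
    Measurable.max measurable_const (Measurable.min measurable_const hψlm)
  have hψ'b : ∀ x, |ψ' x| ≤ C' := by
    intro x
    rw [abs_le]
    exact ⟨le_max_left _ _, max_le (neg_nonpos.2 hC'0 |>.trans hC'0) (min_le_left _ _)⟩
  have hψ'ae : ψ' =ᵐ[μ] ψlim := by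
    filter_upwards [hψlimbd] with x hx
    rw [abs_le] at hx
    rw [hψ'def]
    simp only
    rw [min_eq_right hx.2, max_eq_right hx.1]
  -- integrability of the products
  have hi1 : ∀ n, Integrable (fun x => φ n x * ψ n x) μ := by
    intro n
    have := (hφint n).bdd_mul (c := C') (hψm n).aestronglyMeasurable
      (by filter_upwards [hψbd' n] with x hx; simpa [Real.norm_eq_abs] using hx)
    refine this.congr ?_
    filter_upwards with x; ring
  have hi2 : Integrable (fun x => φlim x * ψlim x) μ := by
    have := hφlimint.bdd_mul (c := C') hψlm.aestronglyMeasurable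
      (by filter_upwards [hψlimbd] with x hx; simpa [Real.norm_eq_abs] using hx)
    refine this.congr ?_
    filter_upwards with x; ring
  refine ⟨hi1, hi2, ?_⟩
  intro g hgm hgB
  obtain ⟨B, hB⟩ := hgB
  set B' : ℝ := max B 0 with hB'def
  have hB'0 : 0 ≤ B' := le_max_right _ _
  have hgB' : ∀ x, |g x| ≤ B' := fun x => (hB x).trans (le_max_left _ _)
  -- norm bound and uniform absolute continuity
  have hconv : ∀ h : α → ℝ, Measurable h → (∃ B : ℝ, ∀ x, |h x| ≤ B) →
      ∃ L : ℝ, Tendsto (fun n => ∫ x, φ n x * h x ∂μ) atTop (nhds L) :=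
    fun h hm hb => ⟨_, hφweak h hm hb⟩
  obtain ⟨M, hM⟩ := weak_norm_bound φ hφm hφint hconv
  have hM0 : 0 ≤ M := (integral_nonneg fun x => abs_nonneg _).trans (hM 0)
  have huac := weak_uac φ hφm hφint hconv
  -- the weakly-converging part
  have hW : Tendsto (fun n => ∫ x, φ n x * (ψ' x * g x) ∂μ) atTop
      (nhds (∫ x, φlim x * (ψ' x * g x) ∂μ)) := by
    refine hφweak (fun x => ψ' x * g x) (hψ'm.mul hgm) ⟨C' * B', fun x => ?_⟩
    rw [abs_mul]
    exact mul_le_mul (hψ'b x) (hgB' x) (abs_nonneg _) hC'0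
  have hlimeq : ∫ x, φlim x * (ψ' x * g x) ∂μ = ∫ x, φlim x * ψlim x * g x ∂μ := by
    refine integral_congr_ae ?_
    filter_upwards [hψ'ae] with x hx
    rw [hx]; ring
  -- integrability of the error terms
  have hi3 : ∀ n, Integrable (fun x => φ n x * ((ψ n x - ψ' x) * g x)) μ := by
    intro n
    have := (hφint n).bdd_mul (f := fun x => (ψ n x - ψ' x) * g x) (c := 2 * C' * B')
      (((hψm n).sub hψ'm).mul hgm).aestronglyMeasurable
      (by
        filter_upwards [hψbd' n] with x hx
        rw [Real.norm_eq_abs, abs_mul]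
        have h1 : |ψ n x - ψ' x| ≤ 2 * C' := by
          calc |ψ n x - ψ' x| ≤ |ψ n x| + |ψ' x| := abs_sub _ _
            _ ≤ C' + C' := add_le_add hx (hψ'b x)
            _ = 2 * C' := by ring
        calc |ψ n x - ψ' x| * |g x| ≤ (2 * C') * B' :=
              mul_le_mul h1 (hgB' x) (abs_nonneg _) (by positivity)
          _ = 2 * C' * B' := by ring)
    refine this.congr ?_
    filter_upwards with x; ring
  have hi4 : ∀ n, Integrable (fun x => φ n x * (ψ' x * g x)) μ := by
    intro n
    have := (hφint n).bdd_mul (f := fun x => ψ' x * g x) (c := C' * B') (hψ'm.mul hgm).aestronglyMeasurable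
      (by
        filter_upwards with x
        rw [Real.norm_eq_abs, abs_mul]
        exact mul_le_mul (hψ'b x) (hgB' x) (abs_nonneg _) hC'0)
    refine this.congr ?_
    filter_upwards with x; ring
  -- the error term tends to zero
  have hzero : Tendsto (fun n => ∫ x, φ n x * ((ψ n x - ψ' x) * g x) ∂μ) atTop (nhds 0) := by
    have hev : ∀ ε : ℝ, 0 < ε → ∀ᶠ n in atTop,
        |∫ x, φ n x * ((ψ n x - ψ' x) * g x) ∂μ| ≤ ε := by
      intro ε hε
      set K₁ : ℝ := 2 * C' * B' + 1 with hK₁def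
      have hK₁ : 0 < K₁ := by positivity
      set K₂ : ℝ := B' * (M + 1) + 1 with hK₂def
      have hK₂ : 0 < K₂ := by positivity
      set ε₁ : ℝ := ε / (2 * K₁) with hε₁def
      have hε₁ : 0 < ε₁ := by positivity
      set ε₂ : ℝ := ε / (2 * K₂) with hε₂def
      have hε₂ : 0 < ε₂ := by positivity
      obtain ⟨δ, hδ, hδuac⟩ := huac ε₁ hε₁
      -- Egorov
      have haet : ∀ᵐ x ∂μ, Tendsto (fun n => ψ n x) atTop (nhds (ψ' x)) := by
        filter_upwards [hψae, hψ'ae] with x h1 h2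
        rw [h2]; exact h1
      obtain ⟨t, htm, hμt, hunif⟩ := tendstoUniformlyOn_of_ae_tendsto'
        (fun n => (hψm n).stronglyMeasurable) hψ'm.stronglyMeasurable haet hδ
      rw [Metric.tendstoUniformlyOn_iff] at hunif
      filter_upwards [hunif ε₂ hε₂] with n hn
      -- pointwise bounds
      have hbd1 : ∀ x ∈ tᶜ, |φ n x * ((ψ n x - ψ' x) * g x)| ≤ |φ n x| * (ε₂ * B') := by
        intro x hx
        have h1 : |ψ n x - ψ' x| ≤ ε₂ := by
          have := hn x hx
          rw [Real.dist_eq, abs_sub_comm] at this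
          exact this.le
        rw [abs_mul, abs_mul]
        refine mul_le_mul_of_nonneg_left ?_ (abs_nonneg _)
        exact mul_le_mul h1 (hgB' x) (abs_nonneg _) hε₂.le
      have hbd2 : ∀ᵐ x ∂μ, |φ n x * ((ψ n x - ψ' x) * g x)| ≤ |φ n x| * (2 * C' * B') := by
        filter_upwards [hψbd' n] with x hx
        rw [abs_mul, abs_mul]
        refine mul_le_mul_of_nonneg_left ?_ (abs_nonneg _)
        have h1 : |ψ n x - ψ' x| ≤ 2 * C' := by
          calc |ψ n x - ψ' x| ≤ |ψ n x| + |ψ' x| := abs_sub _ _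
            _ ≤ C' + C' := add_le_add hx (hψ'b x)
            _ = 2 * C' := by ring
        calc |ψ n x - ψ' x| * |g x| ≤ (2 * C') * B' :=
              mul_le_mul h1 (hgB' x) (abs_nonneg _) (by positivity)
          _ = 2 * C' * B' := by ring
      -- integral splitting
      have hint3 := hi3 n
      calc |∫ x, φ n x * ((ψ n x - ψ' x) * g x) ∂μ|
          ≤ ∫ x, |φ n x * ((ψ n x - ψ' x) * g x)| ∂μ := by
            simpa only [Real.norm_eq_abs] using
              norm_integral_le_integral_norm (fun x => φ n x * ((ψ n x - ψ' x) * g x)) (μ := μ)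
        _ = (∫ x in t, |φ n x * ((ψ n x - ψ' x) * g x)| ∂μ)
            + ∫ x in tᶜ, |φ n x * ((ψ n x - ψ' x) * g x)| ∂μ :=
            (integral_add_compl htm hint3.abs).symm
        _ ≤ (∫ x in t, |φ n x| * (2 * C' * B') ∂μ) + ∫ x in tᶜ, |φ n x| * (ε₂ * B') ∂μ := by
            refine add_le_add ?_ ?_
            · refine integral_mono_ae hint3.abs.integrableOn
                (((hφint n).abs.mul_const _).integrableOn) ?_
              exact ae_restrict_of_ae hbd2
            · refine setIntegral_mono_on hint3.abs.integrableOn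
                (((hφint n).abs.mul_const _).integrableOn) htm.compl hbd1
        _ = (2 * C' * B') * (∫ x in t, |φ n x| ∂μ) + (ε₂ * B') * ∫ x in tᶜ, |φ n x| ∂μ := by
            rw [integral_mul_const, integral_mul_const]; ring
        _ ≤ (2 * C' * B') * ε₁ + (ε₂ * B') * M := by
            refine add_le_add ?_ ?_
            · exact mul_le_mul_of_nonneg_left (hδuac n t htm hμt) (by positivity)
            · refine mul_le_mul_of_nonneg_left ?_ (by positivity)
              calc ∫ x in tᶜ, |φ n x| ∂μ ≤ ∫ x, |φ n x| ∂μ :=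
                    setIntegral_le_integral (hφint n).abs
                      (by filter_upwards with x; exact abs_nonneg _)
                _ ≤ M := hM n
        _ ≤ ε / 2 + ε / 2 := by
            have e1 : (2 * C' * B') * ε₁ ≤ ε / 2 := by
              have h1 : 2 * C' * B' ≤ K₁ := by rw [hK₁def]; linarith
              have h2 : (2 * C' * B') * ε₁ ≤ K₁ * ε₁ := mul_le_mul_of_nonneg_right h1 hε₁.le
              have h3 : K₁ * ε₁ = ε / 2 := by rw [hε₁def]; field_simp
              calc (2 * C' * B') * ε₁ ≤ K₁ * ε₁ := h2
                _ = ε / 2 := h3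
            have e2 : (ε₂ * B') * M ≤ ε / 2 := by
              have h1 : B' * M ≤ K₂ := by rw [hK₂def]; nlinarith
              have h3 : (B' * M) * ε₂ ≤ K₂ * ε₂ := mul_le_mul_of_nonneg_right h1 hε₂.le
              have h4 : K₂ * ε₂ = ε / 2 := by rw [hε₂def]; field_simp
              calc (ε₂ * B') * M = (B' * M) * ε₂ := by ring
                _ ≤ K₂ * ε₂ := h3
                _ = ε / 2 := h4
            exact add_le_add e1 e2
        _ = ε := by ring
    rw [Metric.tendsto_atTop]
    intro ε hε
    obtain ⟨N, hN⟩ := eventually_atTop.1 (hev (ε/2) (half_pos hε))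
    refine ⟨N, fun n hn => ?_⟩
    rw [Real.dist_eq, sub_zero]
    exact lt_of_le_of_lt (hN n hn) (half_lt_self hε)
  -- combine
  have hsum : (fun n => ∫ x, φ n x * ψ n x * g x ∂μ)
      = fun n => (∫ x, φ n x * ((ψ n x - ψ' x) * g x) ∂μ) + ∫ x, φ n x * (ψ' x * g x) ∂μ := by
    funext n
    rw [← integral_add (hi3 n) (hi4 n)]
    congr 1; funext x; ring
  rw [hsum, ← hlimeq]
  have := hzero.add hW
  rwa [zero_add] at this

end Auxiliary

/-- **Product Limit Theorem.** -/
theorem product_limit_theorem {N : ℕ}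
    (X : Set (EuclideanSpace ℝ (Fin N))) (hX : MeasurableSet X)
    (μ : Measure X) [IsFiniteMeasure μ]
    (φ ψ : ℕ → X → ℝ) (φlim ψlim : X → ℝ)
    (hφm : ∀ n, Measurable (φ n)) (hψm : ∀ n, Measurable (ψ n))
    (hφlm : Measurable φlim) (hψlm : Measurable ψlim)
    (C : ℝ) (hψbd : ∀ n, ∀ᵐ x ∂μ, |ψ n x| ≤ C)
    (hψae : ∀ᵐ x ∂μ, Tendsto (fun n => ψ n x) atTop (nhds (ψlim x)))
    (hφint : ∀ n, Integrable (φ n) μ) (hφlimint : Integrable φlim μ)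
    (hφweak : ∀ g : X → ℝ, Measurable g → (∃ B : ℝ, ∀ x, |g x| ≤ B) →
      Tendsto (fun n => ∫ x, φ n x * g x ∂μ) atTop (nhds (∫ x, φlim x * g x ∂μ))) :
    (∀ n, Integrable (fun x => φ n x * ψ n x) μ) ∧
    Integrable (fun x => φlim x * ψlim x) μ ∧
    (∀ g : X → ℝ, Measurable g → (∃ B : ℝ, ∀ x, |g x| ≤ B) →
      Tendsto (fun n => ∫ x, φ n x * ψ n x * g x ∂μ) atTop
        (nhds (∫ x, φlim x * ψlim x * g x ∂μ))) :=
  product_limit_main μ φ ψ φlim ψlim hφm hψm hφlm hψlm C hψbd hψae hφint hφlimint hφweak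
end

section
/- Let b̃ ≥ 0 be measurable on ℝ³×S² with b̃(v−v₁,ω) = b̃(v₁−v,ω) = b̃(v′−v′₁,ω) almost everywhere, and suppose sup_{v∈ℝ³} ∬ b̃(v−v₁,ω)·M(v₁) dv₁ dω ≤ 1. Then for every measurable G : ℝ³ → [0,∞), writing Q̃(√G,√G)(v) = ∬ (√(G′·G′₁) − √(G·G₁))·b̃(v−v₁,ω) dω M(v₁) dv₁, one has ∫_{ℝ³} Q̃(√G,√G)(v)²·M(v) dv ≤ ∭ (√(G′·G′₁) − √(G·G₁))² dμ̃, where dμ̃ = b̃(v−v₁,ω)·M(v)·M(v₁) dv dv₁ dω. -/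
open MeasureTheory Filter Set
open scoped RealInnerProductSpace ENNReal

noncomputable section

/-- The standard Gaussian density `M(v) = (2π)^{−3/2} exp(−|v|²/2)` on `ℝ³`. -/
def gaussM (v : EuclideanSpace ℝ (Fin 3)) : ℝ :=
  (2 * Real.pi) ^ (-(3 : ℝ) / 2) * Real.exp (-‖v‖ ^ 2 / 2)

/-- Post-collisional velocity `v′ = v − ((v−v₁)·ω) ω`. -/
def collV (ω : EuclideanSpace ℝ (Fin 3)) (v v₁ : EuclideanSpace ℝ (Fin 3)) :
    EuclideanSpace ℝ (Fin 3) := v - ⟪v - v₁, ω⟫ • ω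

/-- Post-collisional velocity `v′₁ = v₁ + ((v−v₁)·ω) ω`. -/
def collV₁ (ω : EuclideanSpace ℝ (Fin 3)) (v v₁ : EuclideanSpace ℝ (Fin 3)) :
    EuclideanSpace ℝ (Fin 3) := v₁ + ⟪v - v₁, ω⟫ • ω

/-- The surface measure `dω` on the unit sphere `S² ⊂ ℝ³`. -/
def sphereMeasure : Measure (Metric.sphere (0 : EuclideanSpace ℝ (Fin 3)) 1) :=
  (volume : Measure (EuclideanSpace ℝ (Fin 3))).toSphere

/-- The measure `dμ̃ = b̃(v−v₁,ω)·M(v)·M(v₁) dv dv₁ dω` on `ℝ³×ℝ³×S²`. -/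
def collMeasure
    (b : EuclideanSpace ℝ (Fin 3) → Metric.sphere (0 : EuclideanSpace ℝ (Fin 3)) 1 → ℝ) :
    Measure ((EuclideanSpace ℝ (Fin 3) × EuclideanSpace ℝ (Fin 3)) ×
      Metric.sphere (0 : EuclideanSpace ℝ (Fin 3)) 1) :=
  (((volume : Measure (EuclideanSpace ℝ (Fin 3) × EuclideanSpace ℝ (Fin 3))).prod
      sphereMeasure)).withDensity
    fun q => ENNReal.ofReal (b (q.1.1 - q.1.2) q.2 * gaussM q.1.1 * gaussM q.1.2)

/-- `Q̃(√G,√G)(v) = ∬ (√(G′G′₁) − √(GG₁)) b̃(v−v₁,ω) dω M(v₁) dv₁`. -/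
def QtildeSqrt
    (btilde : EuclideanSpace ℝ (Fin 3) → Metric.sphere (0 : EuclideanSpace ℝ (Fin 3)) 1 → ℝ)
    (G : EuclideanSpace ℝ (Fin 3) → ℝ) (v : EuclideanSpace ℝ (Fin 3)) : ℝ :=
  ∫ v₁, (∫ ω,
      (Real.sqrt (G (collV (ω : EuclideanSpace ℝ (Fin 3)) v v₁) *
            G (collV₁ (ω : EuclideanSpace ℝ (Fin 3)) v v₁))
        - Real.sqrt (G v * G v₁)) * btilde (v - v₁) ω ∂sphereMeasure) * gaussM v₁

section Aux

local notation "E3" => EuclideanSpace ℝ (Fin 3)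
local notation "S2" => Metric.sphere (0 : EuclideanSpace ℝ (Fin 3)) 1

instance : IsFiniteMeasure sphereMeasure := by unfold sphereMeasure; infer_instance

lemma gaussM_nonneg (v : E3) : 0 ≤ gaussM v := by
  unfold gaussM; positivity

lemma measurable_gaussM : Measurable gaussM := by
  unfold gaussM; fun_prop

/-- The collision difference `√(G′G′₁) − √(GG₁)`. -/
def PhiFun (G : E3 → ℝ) (v v₁ : E3) (ω : S2) : ℝ :=
  Real.sqrt (G (collV (ω : E3) v v₁) * G (collV₁ (ω : E3) v v₁)) - Real.sqrt (G v * G v₁)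

lemma continuous_collV_aux :
    Continuous fun q : (E3 × E3) × S2 => (⟪q.1.1 - q.1.2, (q.2 : E3)⟫ • (q.2 : E3) : E3) := by
  have h1 : Continuous fun q : (E3 × E3) × S2 => (q.2 : E3) :=
    continuous_subtype_val.comp continuous_snd
  have h2 : Continuous fun q : (E3 × E3) × S2 => q.1.1 - q.1.2 :=
    ((continuous_fst.comp continuous_fst).sub (continuous_snd.comp continuous_fst))
  exact ((Continuous.inner (𝕜 := ℝ) h2 h1)).smul h1

lemma continuous_collV_q :
    Continuous fun q : (E3 × E3) × S2 => collV (q.2 : E3) q.1.1 q.1.2 := by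
  unfold collV
  exact (continuous_fst.comp continuous_fst).sub continuous_collV_aux

lemma continuous_collV₁_q :
    Continuous fun q : (E3 × E3) × S2 => collV₁ (q.2 : E3) q.1.1 q.1.2 := by
  unfold collV₁
  exact (continuous_snd.comp continuous_fst).add continuous_collV_aux

lemma measurable_phiFun (G : E3 → ℝ) (hGm : Measurable G) :
    Measurable fun q : (E3 × E3) × S2 => PhiFun G q.1.1 q.1.2 q.2 := by
  unfold PhiFun
  apply Measurable.sub
  · exact (Real.continuous_sqrt.measurable).comp
      (((hGm.comp continuous_collV_q.measurable).mul
        (hGm.comp continuous_collV₁_q.measurable)))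
  · exact (Real.continuous_sqrt.measurable).comp
      (((hGm.comp (measurable_fst.fst)).mul (hGm.comp (measurable_fst.snd))))

/-- Cauchy–Schwarz for `∫⁻` against a (sub-)probability measure. -/
lemma sq_lintegral_le {α : Type*} [MeasurableSpace α] (μ : Measure α) (hμ : μ Set.univ ≤ 1)
    (f : α → ℝ≥0∞) (hf : AEMeasurable f μ) :
    (∫⁻ a, f a ∂μ) ^ 2 ≤ ∫⁻ a, f a ^ 2 ∂μ := by
  have hconj : Real.HolderConjugate 2 2 := Real.HolderConjugate.two_two
  have h := ENNReal.lintegral_mul_le_Lp_mul_Lq μ hconj hf (aemeasurable_const (b := (1 : ℝ≥0∞)))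
  simp only [Pi.mul_apply, Pi.one_apply, mul_one, ENNReal.one_rpow, lintegral_one] at h
  have key : ∀ x : ℝ≥0∞, (x ^ ((1 : ℝ) / 2)) ^ 2 = x := by
    intro x
    rw [← ENNReal.rpow_natCast (x ^ ((1 : ℝ) / 2)) 2, ← ENNReal.rpow_mul]
    norm_num
  calc (∫⁻ a, f a ∂μ) ^ 2
      ≤ ((∫⁻ a, f a ^ (2 : ℝ) ∂μ) ^ ((1 : ℝ) / 2) * (μ Set.univ) ^ ((1 : ℝ) / 2)) ^ 2 := by
        gcongr
    _ = (∫⁻ a, f a ^ (2 : ℝ) ∂μ) * μ Set.univ := by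
        rw [mul_pow, key, key]
    _ ≤ (∫⁻ a, f a ^ (2 : ℝ) ∂μ) * 1 := by gcongr
    _ = ∫⁻ a, f a ^ 2 ∂μ := by
        rw [mul_one]
        congr 1
        funext a
        rw [← ENNReal.rpow_natCast (f a) 2]
        norm_num

/-- Unfolding a `withDensity` on `ℝ³ × S²` into an iterated integral. -/
lemma lintegral_density_prod (c : E3 × S2 → ℝ) (hc : Measurable c)
    (f : E3 × S2 → ℝ≥0∞) (hf : Measurable f) :
    ∫⁻ p, f p ∂(((volume : Measure E3).prod sphereMeasure).withDensity
        fun p => ENNReal.ofReal (c p))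
      = ∫⁻ v₁, ∫⁻ ω, ENNReal.ofReal (c (v₁, ω)) * f (v₁, ω) ∂sphereMeasure := by
  rw [lintegral_withDensity_eq_lintegral_mul _ hc.ennreal_ofReal hf]
  exact lintegral_prod _ ((hc.ennreal_ofReal.mul hf).aemeasurable)

end Aux

set_option maxHeartbeats 1000000 in
/-- If the kernel `b̃ ≥ 0` has the collision symmetries and satisfies
`sup_v ∬ b̃(v−v₁,ω) M₁ dv₁ dω ≤ 1`, then for every measurable `G ≥ 0`,
`∫ Q̃(√G,√G)(v)² M(v) dv ≤ ∭ (√(G′G′₁) − √(GG₁))² dμ̃`. -/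
theorem QtildeSqrt_l2_bound
    (btilde : EuclideanSpace ℝ (Fin 3) →
      Metric.sphere (0 : EuclideanSpace ℝ (Fin 3)) 1 → ℝ)
    (hbm : Measurable (Function.uncurry btilde)) (hb0 : ∀ z ϖ, 0 ≤ btilde z ϖ)
    (hbsym : ∀ᵐ q ∂(((volume :
          Measure (EuclideanSpace ℝ (Fin 3) × EuclideanSpace ℝ (Fin 3))).prod
        sphereMeasure)),
      btilde (q.1.1 - q.1.2) q.2 = btilde (q.1.2 - q.1.1) q.2 ∧
      btilde (q.1.1 - q.1.2) q.2
        = btilde (collV (q.2 : EuclideanSpace ℝ (Fin 3)) q.1.1 q.1.2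
            - collV₁ (q.2 : EuclideanSpace ℝ (Fin 3)) q.1.1 q.1.2) q.2)
    (hbsup : ∀ v : EuclideanSpace ℝ (Fin 3),
      ∫⁻ v₁, ENNReal.ofReal (gaussM v₁) *
          ∫⁻ ω, ENNReal.ofReal (btilde (v - v₁) ω) ∂sphereMeasure ≤ 1)
    (G : EuclideanSpace ℝ (Fin 3) → ℝ) (hGm : Measurable G) (hG0 : ∀ v, 0 ≤ G v) :
    ∫⁻ v, ENNReal.ofReal ((QtildeSqrt btilde G v) ^ 2 * gaussM v)
      ≤ ∫⁻ q, ENNReal.ofReal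
          ((Real.sqrt (G (collV (q.2 : EuclideanSpace ℝ (Fin 3)) q.1.1 q.1.2) *
                G (collV₁ (q.2 : EuclideanSpace ℝ (Fin 3)) q.1.1 q.1.2))
            - Real.sqrt (G q.1.1 * G q.1.2)) ^ 2) ∂(collMeasure btilde) := by
  clear hbsym
  -- measurability facts
  have hΦm : Measurable fun q : ((EuclideanSpace ℝ (Fin 3)) × (EuclideanSpace ℝ (Fin 3))) × Metric.sphere (0 : (EuclideanSpace ℝ (Fin 3))) 1 =>
      PhiFun G q.1.1 q.1.2 q.2 := measurable_phiFun G hGm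
  have hΦm2 : ∀ v : (EuclideanSpace ℝ (Fin 3)), Measurable fun p : (EuclideanSpace ℝ (Fin 3)) × Metric.sphere (0 : (EuclideanSpace ℝ (Fin 3))) 1 =>
      PhiFun G v p.1 p.2 := by
    intro v
    exact Measurable.comp (f := fun p : (EuclideanSpace ℝ (Fin 3)) × Metric.sphere (0 : (EuclideanSpace ℝ (Fin 3))) 1 => ((v, p.1), p.2)) hΦm ((measurable_const.prodMk measurable_fst).prodMk measurable_snd)
  have hΦmω : ∀ (v v₁ : (EuclideanSpace ℝ (Fin 3))), Measurable fun ω : Metric.sphere (0 : (EuclideanSpace ℝ (Fin 3))) 1 =>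
      PhiFun G v v₁ ω := by
    intro v v₁
    exact Measurable.comp (f := fun ω : Metric.sphere (0 : (EuclideanSpace ℝ (Fin 3))) 1 => ((v, v₁), ω)) hΦm (measurable_const.prodMk measurable_id)
  have hbm2 : ∀ v : (EuclideanSpace ℝ (Fin 3)), Measurable fun p : (EuclideanSpace ℝ (Fin 3)) × Metric.sphere (0 : (EuclideanSpace ℝ (Fin 3))) 1 =>
      btilde (v - p.1) p.2 := by
    intro v
    exact Measurable.comp (f := fun p : (EuclideanSpace ℝ (Fin 3)) × Metric.sphere (0 : (EuclideanSpace ℝ (Fin 3))) 1 => (v - p.1, p.2)) hbm ((measurable_const.sub measurable_fst).prodMk measurable_snd)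
  have hbmω : ∀ (v v₁ : (EuclideanSpace ℝ (Fin 3))), Measurable fun ω : Metric.sphere (0 : (EuclideanSpace ℝ (Fin 3))) 1 =>
      btilde (v - v₁) ω := by
    intro v v₁
    exact Measurable.comp (f := fun ω : Metric.sphere (0 : (EuclideanSpace ℝ (Fin 3))) 1 => (v - v₁, ω)) hbm (measurable_const.prodMk measurable_id)
  -- the inner quadratic quantity
  set B : (EuclideanSpace ℝ (Fin 3)) → ℝ≥0∞ := fun v => ∫⁻ v₁, ENNReal.ofReal (gaussM v₁) *
      ∫⁻ ω, ENNReal.ofReal (PhiFun G v v₁ ω ^ 2) *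
        ENNReal.ofReal (btilde (v - v₁) ω) ∂sphereMeasure with hB
  -- Step 1: pointwise bound
  have key : ∀ v : (EuclideanSpace ℝ (Fin 3)), ENNReal.ofReal ((QtildeSqrt btilde G v) ^ 2 * gaussM v)
      ≤ ENNReal.ofReal (gaussM v) * B v := by
    intro v
    set μv : Measure ((EuclideanSpace ℝ (Fin 3)) × Metric.sphere (0 : (EuclideanSpace ℝ (Fin 3))) 1) :=
      ((volume : Measure (EuclideanSpace ℝ (Fin 3))).prod sphereMeasure).withDensity
        fun p => ENNReal.ofReal (btilde (v - p.1) p.2 * gaussM p.1) with hμv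
    have hcm : Measurable fun p : (EuclideanSpace ℝ (Fin 3)) × Metric.sphere (0 : (EuclideanSpace ℝ (Fin 3))) 1 =>
        btilde (v - p.1) p.2 * gaussM p.1 := (hbm2 v).mul (measurable_gaussM.comp measurable_fst)
    -- total mass bound
    have hμv_univ : μv Set.univ ≤ 1 := by
      calc μv Set.univ = ∫⁻ _, (1 : ℝ≥0∞) ∂μv := lintegral_one.symm
        _ = ∫⁻ v₁, ∫⁻ ω, ENNReal.ofReal (btilde (v - v₁) ω * gaussM v₁) * 1 ∂sphereMeasure := by
            rw [hμv]
            exact lintegral_density_prod _ hcm _ measurable_const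
        _ = ∫⁻ v₁, ENNReal.ofReal (gaussM v₁) *
              ∫⁻ ω, ENNReal.ofReal (btilde (v - v₁) ω) ∂sphereMeasure := by
            refine lintegral_congr fun v₁ => ?_
            rw [← lintegral_const_mul _ ((hbmω v v₁).ennreal_ofReal)]
            refine lintegral_congr fun ω => ?_
            rw [mul_one, ENNReal.ofReal_mul (hb0 _ _), mul_comm]
        _ ≤ 1 := hbsup v
    -- A-bound : |Q v| is dominated by ∫⁻ |Φ| dμv
    have hA : ENNReal.ofReal |QtildeSqrt btilde G v|
        ≤ ∫⁻ p, ENNReal.ofReal |PhiFun G v p.1 p.2| ∂μv := by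
      have hμv_eq : ∫⁻ p, ENNReal.ofReal |PhiFun G v p.1 p.2| ∂μv
          = ∫⁻ v₁, ∫⁻ ω, ENNReal.ofReal (btilde (v - v₁) ω * gaussM v₁) *
              ENNReal.ofReal |PhiFun G v v₁ ω| ∂sphereMeasure := by
        rw [hμv]
        exact lintegral_density_prod _ hcm _ ((hΦm2 v).abs.ennreal_ofReal)
      rw [hμv_eq]
      calc ENNReal.ofReal |QtildeSqrt btilde G v|
          = (‖QtildeSqrt btilde G v‖₊ : ℝ≥0∞) := by
            rw [← Real.norm_eq_abs, ofReal_norm, enorm_eq_nnnorm]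
        _ ≤ ∫⁻ v₁, ‖(∫ ω, PhiFun G v v₁ ω * btilde (v - v₁) ω ∂sphereMeasure) * gaussM v₁‖₊ := by
            exact enorm_integral_le_lintegral_enorm _
        _ ≤ ∫⁻ v₁, ∫⁻ ω, ENNReal.ofReal (btilde (v - v₁) ω * gaussM v₁) *
              ENNReal.ofReal |PhiFun G v v₁ ω| ∂sphereMeasure := by
            refine lintegral_mono fun v₁ => ?_
            calc (‖(∫ ω, PhiFun G v v₁ ω * btilde (v - v₁) ω ∂sphereMeasure) * gaussM v₁‖₊ : ℝ≥0∞)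
                = (‖∫ ω, PhiFun G v v₁ ω * btilde (v - v₁) ω ∂sphereMeasure‖₊ : ℝ≥0∞) *
                    ENNReal.ofReal (gaussM v₁) := by
                  rw [nnnorm_mul, ENNReal.coe_mul]
                  congr 1
                  rw [← enorm_eq_nnnorm, ← ofReal_norm, Real.norm_eq_abs,
                    abs_of_nonneg (gaussM_nonneg v₁)]
              _ ≤ (∫⁻ ω, ‖PhiFun G v v₁ ω * btilde (v - v₁) ω‖₊ ∂sphereMeasure) *
                    ENNReal.ofReal (gaussM v₁) := by
                  gcongr
                  exact enorm_integral_le_lintegral_enorm _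
              _ = ∫⁻ ω, ENNReal.ofReal (btilde (v - v₁) ω * gaussM v₁) *
                    ENNReal.ofReal |PhiFun G v v₁ ω| ∂sphereMeasure := by
                  rw [← lintegral_mul_const _
                    (((hΦmω v v₁).fun_mul (hbmω v v₁)).nnnorm.coe_nnreal_ennreal)]
                  refine lintegral_congr fun ω => ?_
                  rw [ENNReal.ofReal_mul (hb0 _ _), ← enorm_eq_nnnorm, ← ofReal_norm,
                    Real.norm_eq_abs, abs_mul, abs_of_nonneg (hb0 _ _),
                    ENNReal.ofReal_mul (abs_nonneg _)]
                  ring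
    -- B as an integral over μv
    have hBμ : ∫⁻ p, ENNReal.ofReal |PhiFun G v p.1 p.2| ^ 2 ∂μv = B v := by
      have : ∫⁻ p, ENNReal.ofReal |PhiFun G v p.1 p.2| ^ 2 ∂μv
          = ∫⁻ v₁, ∫⁻ ω, ENNReal.ofReal (btilde (v - v₁) ω * gaussM v₁) *
              ENNReal.ofReal |PhiFun G v v₁ ω| ^ 2 ∂sphereMeasure := by
        rw [hμv]
        exact lintegral_density_prod _ hcm _ (((hΦm2 v).abs.ennreal_ofReal).pow measurable_const)
      rw [this, hB]
      refine lintegral_congr fun v₁ => ?_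
      rw [← lintegral_const_mul _ (((hΦmω v v₁).pow_const 2).ennreal_ofReal.fun_mul
        ((hbmω v v₁).ennreal_ofReal))]
      refine lintegral_congr fun ω => ?_
      rw [ENNReal.ofReal_mul (hb0 _ _), ← ENNReal.ofReal_pow (abs_nonneg _), sq_abs]
      ring
    -- Cauchy–Schwarz
    have hCS := sq_lintegral_le μv hμv_univ _ ((hΦm2 v).abs.ennreal_ofReal).aemeasurable
    rw [hBμ] at hCS
    calc ENNReal.ofReal ((QtildeSqrt btilde G v) ^ 2 * gaussM v)
        = ENNReal.ofReal |QtildeSqrt btilde G v| ^ 2 * ENNReal.ofReal (gaussM v) := by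
          rw [ENNReal.ofReal_mul (sq_nonneg _), ← ENNReal.ofReal_pow (abs_nonneg _), sq_abs]
      _ ≤ (∫⁻ p, ENNReal.ofReal |PhiFun G v p.1 p.2| ∂μv) ^ 2 * ENNReal.ofReal (gaussM v) := by
          gcongr
      _ ≤ B v * ENNReal.ofReal (gaussM v) := by gcongr
      _ = ENNReal.ofReal (gaussM v) * B v := mul_comm _ _
  -- Step 2: rewrite the RHS
  have hRHS : ∫⁻ q, ENNReal.ofReal
          ((Real.sqrt (G (collV (q.2 : (EuclideanSpace ℝ (Fin 3))) q.1.1 q.1.2) *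
                G (collV₁ (q.2 : (EuclideanSpace ℝ (Fin 3))) q.1.1 q.1.2))
            - Real.sqrt (G q.1.1 * G q.1.2)) ^ 2) ∂(collMeasure btilde)
      = ∫⁻ v, ENNReal.ofReal (gaussM v) * B v := by
    have hdm : Measurable fun q : ((EuclideanSpace ℝ (Fin 3)) × (EuclideanSpace ℝ (Fin 3))) × Metric.sphere (0 : (EuclideanSpace ℝ (Fin 3))) 1 =>
        ENNReal.ofReal (btilde (q.1.1 - q.1.2) q.2 * gaussM q.1.1 * gaussM q.1.2) := by
      apply Measurable.ennreal_ofReal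
      exact ((Measurable.comp (f := fun q : ((EuclideanSpace ℝ (Fin 3)) × (EuclideanSpace ℝ (Fin 3))) × Metric.sphere (0 : (EuclideanSpace ℝ (Fin 3))) 1 => (q.1.1 - q.1.2, q.2)) hbm ((measurable_fst.fst.sub measurable_fst.snd).prodMk measurable_snd)).mul
        (measurable_gaussM.comp (measurable_fst.fst))).mul
        (measurable_gaussM.comp (measurable_fst.snd))
    have hfm : Measurable fun q : ((EuclideanSpace ℝ (Fin 3)) × (EuclideanSpace ℝ (Fin 3))) × Metric.sphere (0 : (EuclideanSpace ℝ (Fin 3))) 1 =>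
        ENNReal.ofReal (PhiFun G q.1.1 q.1.2 q.2 ^ 2) :=
      ((hΦm.pow_const 2).ennreal_ofReal)
    show ∫⁻ q, ENNReal.ofReal (PhiFun G q.1.1 q.1.2 q.2 ^ 2) ∂(collMeasure btilde)
      = ∫⁻ v, ENNReal.ofReal (gaussM v) * B v
    rw [collMeasure, lintegral_withDensity_eq_lintegral_mul _ hdm hfm]
    simp only [Pi.mul_apply]
    rw [lintegral_prod _ ((hdm.fun_mul hfm).aemeasurable)]
    have hg : AEMeasurable (fun p : (EuclideanSpace ℝ (Fin 3)) × (EuclideanSpace ℝ (Fin 3)) =>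
        ∫⁻ ω, ENNReal.ofReal (btilde (p.1 - p.2) ω * gaussM p.1 * gaussM p.2) *
          ENNReal.ofReal (PhiFun G p.1 p.2 ω ^ 2) ∂sphereMeasure)
        ((volume : Measure (EuclideanSpace ℝ (Fin 3))).prod volume) := by
      apply Measurable.aemeasurable
      exact Measurable.lintegral_prod_right (f := fun (p : (EuclideanSpace ℝ (Fin 3)) × (EuclideanSpace ℝ (Fin 3))) ω =>
        ENNReal.ofReal (btilde (p.1 - p.2) ω * gaussM p.1 * gaussM p.2) *
          ENNReal.ofReal (PhiFun G p.1 p.2 ω ^ 2)) (hdm.mul hfm)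
    rw [Measure.volume_eq_prod, lintegral_prod _ hg]
    refine lintegral_congr fun v => ?_
    have hmv₁ : ∀ v₁ : (EuclideanSpace ℝ (Fin 3)), Measurable fun ω : Metric.sphere (0 : (EuclideanSpace ℝ (Fin 3))) 1 =>
        ENNReal.ofReal (PhiFun G v v₁ ω ^ 2) * ENNReal.ofReal (btilde (v - v₁) ω) := fun v₁ =>
      ((hΦmω v v₁).pow_const 2).ennreal_ofReal.mul ((hbmω v v₁).ennreal_ofReal)
    have houter : Measurable fun v₁ : (EuclideanSpace ℝ (Fin 3)) => ENNReal.ofReal (gaussM v₁) *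
        ∫⁻ ω, ENNReal.ofReal (PhiFun G v v₁ ω ^ 2) *
          ENNReal.ofReal (btilde (v - v₁) ω) ∂sphereMeasure := by
      refine (measurable_gaussM.ennreal_ofReal).mul ?_
      exact Measurable.lintegral_prod_right (f := fun (v₁ : (EuclideanSpace ℝ (Fin 3))) ω =>
        ENNReal.ofReal (PhiFun G v v₁ ω ^ 2) * ENNReal.ofReal (btilde (v - v₁) ω))
        (((hΦm2 v).pow_const 2).ennreal_ofReal.mul ((hbm2 v).ennreal_ofReal))
    rw [← lintegral_const_mul _ houter]
    refine lintegral_congr fun v₁ => ?_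
    rw [← lintegral_const_mul _ (hmv₁ v₁),
      ← lintegral_const_mul _ (measurable_const.fun_mul (hmv₁ v₁))]
    refine lintegral_congr fun ω => ?_
    rw [ENNReal.ofReal_mul (mul_nonneg (hb0 _ _) (gaussM_nonneg _)),
      ENNReal.ofReal_mul (hb0 _ _)]
    ring
  calc ∫⁻ v, ENNReal.ofReal ((QtildeSqrt btilde G v) ^ 2 * gaussM v)
      ≤ ∫⁻ v, ENNReal.ofReal (gaussM v) * B v := lintegral_mono key
    _ = _ := hRHS.symm

end
end
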